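/- Let p and q be probability measures on a measurable space α with p absolutely continuous with respect to q, let ω : α → ℝ be the real-valued Radon–Nikodym derivative of p with respect to q, and let r : α → ℝ be measurable with |r(x)| ≤ R for q-almost every x, where R ≥ 0. Assume ω·r is square-integrable with respect to q. Let J = ∫ r dp, let N ≥ 1, let q^N be the product measure on Fin N → α of N copies of q, and define Ŵ(x) = (1/N) · ∑_{i∈Fin N} ω(x i) · r(x i). Then for every δ with 0 < δ ≤ 1, q^N { x : J ≥ Ŵ(x) − sqrt( ((1 − δ)/δ) · Var_q(ω · r) / N ) } ≥ 1 − δ. (Theorem 2: with probability at least 1 − δ, the true expected reward under p lower-bounds the empirical marginalized-importance-sampling estimate minus a variance penalty; hence the variance-regularized objective is a lower bound to the true objective.) -/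

import Mathlib

open MeasureTheory ProbabilityTheory


section Aux

variable {α : Type*} [MeasurableSpace α]

lemma pi_map_eval (q : Measure α) [IsProbabilityMeasure q] {N : ℕ} (i : Fin N) :
    (Measure.pi fun _ : Fin N => q).map (fun x => x i) = q := by
  ext s hs
  rw [Measure.map_apply (measurable_pi_apply i) hs]
  have h : (fun x : Fin N → α => x i) ⁻¹' s
      = Set.pi Set.univ (Function.update (fun _ : Fin N => Set.univ) i s) := by
    ext x
    simp only [Set.mem_preimage, Set.mem_pi, Set.mem_univ, true_implies]
    constructor
    · intro hx j
      rcases eq_or_ne j i with rfl | hj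
      · simpa using hx
      · simp [Function.update_of_ne hj]
    · intro hx
      simpa using hx i
  rw [h, Measure.pi_pi]
  have h2 : ∀ j : Fin N, q (Function.update (fun _ : Fin N => Set.univ) i s j)
      = Function.update (fun _ : Fin N => (1 : ENNReal)) i (q s) j := by
    intro j
    rcases eq_or_ne j i with rfl | hj
    · simp
    · simp [Function.update_of_ne hj]
  rw [Finset.prod_congr rfl fun j _ => h2 j,
    Finset.prod_update_of_mem (Finset.mem_univ i)]
  simp

lemma iIndepFun_eval_pi (q : Measure α) [IsProbabilityMeasure q] (N : ℕ) :
    iIndepFun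
      (fun (i : Fin N) (x : Fin N → α) => x i) (Measure.pi fun _ : Fin N => q) := by
  rw [iIndepFun_iff_measure_inter_preimage_eq_mul]
  intro S sets hsets
  classical
  have h1 : (⋂ i ∈ S, (fun x : Fin N → α => x i) ⁻¹' sets i)
      = Set.pi Set.univ (fun j => if j ∈ S then sets j else Set.univ) := by
    ext x
    simp only [Set.mem_iInter, Set.mem_preimage, Set.mem_pi, Set.mem_univ, true_implies]
    constructor
    · intro h j
      by_cases hj : j ∈ S
      · simpa [hj] using h j hj
      · simp [hj]
    · intro h i hi
      have := h i
      rwa [if_pos hi] at this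
  have h2 : ∀ i ∈ S, (Measure.pi fun _ : Fin N => q) ((fun x : Fin N → α => x i) ⁻¹' sets i)
      = q (sets i) := by
    intro i hi
    rw [← Measure.map_apply (measurable_pi_apply i) (hsets i hi), pi_map_eval]
  rw [h1, Measure.pi_pi, Finset.prod_congr rfl h2]
  calc ∏ j : Fin N, q (if j ∈ S then sets j else Set.univ)
      = ∏ j : Fin N, (if j ∈ S then q (sets j) else 1) := by
        refine Finset.prod_congr rfl fun j _ => ?_
        split_ifs <;> simp
    _ = ∏ j ∈ S, q (sets j) := by
        rw [Finset.prod_ite_mem, Finset.univ_inter]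

end Aux


lemma cantelli {Ω : Type*} [MeasurableSpace Ω] (μ : Measure Ω) [IsProbabilityMeasure μ]
    {Z : Ω → ℝ} (hZ : MemLp Z 2 μ) {c : ℝ} (hc : 0 < c) :
    μ {x | (∫ z, Z z ∂μ) + c < Z x}
      ≤ ENNReal.ofReal (variance Z μ / (variance Z μ + c ^ 2)) := by
  set m := ∫ z, Z z ∂μ with hm
  set v := variance Z μ with hv
  have hv0 : 0 ≤ v := variance_nonneg _ _
  set u := v / c with hu
  have hu0 : 0 ≤ u := div_nonneg hv0 hc.le
  have hZ1 : Integrable Z μ := hZ.integrable one_le_two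
  have hZsub : MemLp (fun x => Z x - m) 2 μ := hZ.sub (memLp_const m)
  have hsq : Integrable (fun x => (Z x - m) ^ 2) μ := hZsub.integrable_sq
  have hgint : Integrable (fun x => (Z x - m + u) ^ 2) μ := by
    have h1 : Integrable (fun x => (Z x - m) ^ 2 + ((2 * u) * (Z x - m) + u ^ 2)) μ :=
      hsq.add (((hZ1.sub (integrable_const m)).const_mul (2 * u)).add (integrable_const _))
    refine h1.congr (ae_of_all _ fun x => ?_)
    ring
  have hintsub : ∫ x, (Z x - m) ∂μ = 0 := by
    rw [integral_sub hZ1 (integrable_const m), integral_const]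
    simp [hm]
  have hvar : ∫ x, (Z x - m) ^ 2 ∂μ = v := by
    rw [hv, variance_eq_integral hZ.aestronglyMeasurable.aemeasurable]
  have hgval : ∫ x, (Z x - m + u) ^ 2 ∂μ = v + u ^ 2 := by
    have e : (fun x => (Z x - m + u) ^ 2)
        = fun x => (Z x - m) ^ 2 + ((2 * u) * (Z x - m) + u ^ 2) := by
      funext x; ring
    have hlin : Integrable (fun x => (2 * u) * (Z x - m)) μ :=
      (hZ1.sub (integrable_const m)).const_mul (2 * u)
    have hrest : Integrable (fun x => (2 * u) * (Z x - m) + u ^ 2) μ :=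
      hlin.add (integrable_const _)
    rw [e, integral_add hsq hrest, integral_add hlin (integrable_const _),
      MeasureTheory.integral_const_mul, hintsub, hvar, integral_const]
    simp
  have hcu : 0 < (c + u) ^ 2 := by positivity
  have hsubset : {x | m + c < Z x} ⊆ {x | (c + u) ^ 2 ≤ (fun x => (Z x - m + u) ^ 2) x} := by
    intro x hx
    have hx' : m + c < Z x := hx
    have h1 : c + u ≤ Z x - m + u := by linarith
    have h2 : (0:ℝ) ≤ c + u := by positivity
    exact pow_le_pow_left₀ h2 h1 2
  have hmarkov := mul_meas_ge_le_integral_of_nonneg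
    (ae_of_all μ fun x => sq_nonneg (Z x - m + u)) hgint ((c + u) ^ 2)
  have hfin : μ {x | (c + u) ^ 2 ≤ (fun x => (Z x - m + u) ^ 2) x}
      ≤ ENNReal.ofReal ((v + u ^ 2) / (c + u) ^ 2) := by
    rw [← ENNReal.ofReal_toReal (measure_ne_top μ _)]
    apply ENNReal.ofReal_le_ofReal
    rw [le_div_iff₀ hcu, mul_comm]
    calc (c + u) ^ 2 * (μ {x | (c + u) ^ 2 ≤ (fun x => (Z x - m + u) ^ 2) x}).toReal
        ≤ ∫ x, (Z x - m + u) ^ 2 ∂μ := hmarkov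
      _ = v + u ^ 2 := hgval
  have key : (v + u ^ 2) / (c + u) ^ 2 = v / (v + c ^ 2) := by
    have hvc : v + c ^ 2 ≠ 0 := by positivity
    rw [hu]
    field_simp
    ring
  calc μ {x | m + c < Z x} ≤ μ {x | (c + u) ^ 2 ≤ (fun x => (Z x - m + u) ^ 2) x} :=
        measure_mono hsubset
    _ ≤ ENNReal.ofReal ((v + u ^ 2) / (c + u) ^ 2) := hfin
    _ = ENNReal.ofReal (v / (v + c ^ 2)) := by rw [key]


lemma main_aux {α : Type*} [MeasurableSpace α] (q : Measure α) [IsProbabilityMeasure q]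
    {f : α → ℝ} (hfm : Measurable f) (hf2 : MemLp f 2 q)
    (N : ℕ) (hN : 1 ≤ N) {δ : ℝ} (hδ0 : 0 < δ) (hδ1 : δ < 1) :
    (Measure.pi fun _ : Fin N => q)
      {x : Fin N → α | (∫ y, f y ∂q) ≥
        (1 / (N : ℝ)) * (∑ i : Fin N, f (x i)) -
          Real.sqrt (((1 - δ) / δ) * (∫ y, (f y - ∫ z, f z ∂q) ^ 2 ∂q) / N)}
      ≥ ENNReal.ofReal (1 - δ) := by
  classical
  set μN := Measure.pi fun _ : Fin N => q with hμN
  set Jq := ∫ y, f y ∂q with hJq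
  set V := ∫ y, (f y - Jq) ^ 2 ∂q with hVdef
  set s := Real.sqrt (((1 - δ) / δ) * V / N) with hsdef
  have hNpos : (0 : ℝ) < N := by exact_mod_cast hN
  have hf1 : Integrable f q := hf2.integrable one_le_two
  have hVvar : V = variance f q := by
    rw [hVdef, variance_eq_integral hf2.aestronglyMeasurable.aemeasurable]
  have hV0 : 0 ≤ V := by
    rw [hVvar]; exact variance_nonneg _ _
  have hs0 : 0 ≤ s := Real.sqrt_nonneg _
  -- transfer structure
  have hmp : ∀ i : Fin N, MeasurePreserving (fun x : Fin N → α => x i) μN q :=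
    fun i => ⟨measurable_pi_apply i, pi_map_eval q i⟩
  have hXℒ : ∀ i : Fin N, MemLp (fun x : Fin N → α => f (x i)) 2 μN :=
    fun i => hf2.comp_measurePreserving (hmp i)
  have hInt : ∀ (g : α → ℝ), Measurable g → ∀ i : Fin N,
      ∫ x, g (x i) ∂μN = ∫ y, g y ∂q := by
    intro g hg i
    rw [← (hmp i).map_eq,
      integral_map (measurable_pi_apply i).aemeasurable hg.aestronglyMeasurable]
  have EX : ∀ i : Fin N, ∫ x, f (x i) ∂μN = Jq := fun i => hInt f hfm i
  have hsum_eq : (∑ i : Fin N, fun x : Fin N → α => f (x i))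
      = fun x : Fin N → α => ∑ i : Fin N, f (x i) := by
    funext x; simp
  have hYℒ : MemLp (fun x : Fin N → α => ∑ i : Fin N, f (x i)) 2 μN :=
    hsum_eq ▸ memLp_finset_sum' _ (fun i _ => hXℒ i)
  have EY : ∫ x, (∑ i : Fin N, f (x i)) ∂μN = N * Jq := by
    rw [integral_finset_sum _ (fun i _ => (hXℒ i).integrable one_le_two)]
    simp [EX, Finset.sum_const, nsmul_eq_mul]
  have hVarX : ∀ i : Fin N, variance (fun x : Fin N → α => f (x i)) μN = V := by
    intro i
    rw [variance_eq_integral (hXℒ i).aestronglyMeasurable.aemeasurable, hVvar, variance_eq_integral hf2.aestronglyMeasurable.aemeasurable]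
    show ∫ x, (f (x i) - ∫ x', f (x' i) ∂μN) ^ 2 ∂μN = _
    rw [EX i]
    exact hInt (fun y => (f y - Jq) ^ 2) ((hfm.sub measurable_const).pow measurable_const) i
  have hiid : iIndepFun
      (fun (i : Fin N) (x : Fin N → α) => f (x i)) μN :=
    (iIndepFun_eval_pi q N).comp (fun _ => f) (fun _ => hfm)
  have hVarY : variance (fun x : Fin N → α => ∑ i : Fin N, f (x i)) μN = N * V := by
    rw [← hsum_eq, IndepFun.variance_sum (fun i _ => hXℒ i)
      (fun i _ j _ hij => hiid.indepFun hij)]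
    simp [hVarX, Finset.sum_const, nsmul_eq_mul]
  -- union bound reduction
  have key : ∀ E : Set (Fin N → α), μN Eᶜ ≤ ENNReal.ofReal δ →
      ENNReal.ofReal (1 - δ) ≤ μN E := by
    intro E hE
    have h1 : (1 : ENNReal) ≤ μN E + ENNReal.ofReal δ := by
      calc (1 : ENNReal) = μN (E ∪ Eᶜ) := by rw [Set.union_compl_self]; exact measure_univ.symm
        _ ≤ μN E + μN Eᶜ := measure_union_le _ _
        _ ≤ μN E + ENNReal.ofReal δ := add_le_add_right hE _
    have h2 : ENNReal.ofReal (1 - δ) + ENNReal.ofReal δ = 1 := by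
      rw [← ENNReal.ofReal_add (by linarith) hδ0.le]
      norm_num
    rw [← h2] at h1
    exact (ENNReal.add_le_add_iff_right ENNReal.ofReal_ne_top).mp h1
  refine key _ ?_
  rcases eq_or_lt_of_le hV0 with hV | hV
  · -- zero-variance case: the estimate is a.e. exactly Jq
    have hae : ∀ᵐ y ∂q, f y = Jq := by
      have h0 : ∫ y, (f y - Jq) ^ 2 ∂q = 0 := by rw [← hVdef, ← hV]
      have hint2 : Integrable (fun y => (f y - Jq) ^ 2) q :=
        (hf2.sub (memLp_const Jq)).integrable_sq
      have := (integral_eq_zero_iff_of_nonneg (fun y => sq_nonneg (f y - Jq)) hint2).mp h0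
      filter_upwards [this] with y hy
      have : (f y - Jq) ^ 2 = 0 := hy
      have := pow_eq_zero_iff (n := 2) (by norm_num) |>.mp this
      linarith [sub_eq_zero.mp this]
    have hnull : q {y | f y ≠ Jq} = 0 := ae_iff.mp hae
    have hsubset : {x : Fin N → α | (Jq : ℝ) ≥
        (1 / (N : ℝ)) * (∑ i : Fin N, f (x i)) - s}ᶜ
        ⊆ ⋃ i : Fin N, (fun x : Fin N → α => x i) ⁻¹' {y | f y ≠ Jq} := by
      intro x hx
      by_contra hmem
      simp only [Set.mem_iUnion, Set.mem_preimage, Set.mem_setOf_eq, not_exists,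
        not_not] at hmem
      apply hx
      have hsum : (∑ i : Fin N, f (x i)) = N * Jq := by
        rw [Finset.sum_congr rfl fun i _ => hmem i]
        simp [Finset.sum_const, nsmul_eq_mul]
      show Jq ≥ (1 / (N : ℝ)) * (∑ i : Fin N, f (x i)) - s
      rw [hsum]
      have : (1 / (N : ℝ)) * ((N : ℝ) * Jq) = Jq := by field_simp
      rw [this]
      linarith
    have hnullN : μN (⋃ i : Fin N, (fun x : Fin N → α => x i) ⁻¹' {y | f y ≠ Jq}) = 0 := by
      refine measure_iUnion_null fun i => ?_
      have hms : MeasurableSet {y : α | f y ≠ Jq} :=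
        (measurableSet_eq_fun hfm measurable_const).compl
      rw [← Measure.map_apply (measurable_pi_apply i) hms, (hmp i).map_eq]
      exact hnull
    calc μN _ ≤ μN (⋃ i : Fin N, (fun x : Fin N → α => x i) ⁻¹' {y | f y ≠ Jq}) :=
          measure_mono hsubset
      _ = 0 := hnullN
      _ ≤ ENNReal.ofReal δ := zero_le
  · -- positive variance: Cantelli
    have h1δ : (0 : ℝ) < 1 - δ := by linarith
    have hargpos : (0 : ℝ) < ((1 - δ) / δ) * V / N :=
      div_pos (mul_pos (div_pos h1δ hδ0) hV) hNpos
    have hs2 : s ^ 2 = ((1 - δ) / δ) * V / N := Real.sq_sqrt hargpos.le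
    have hspos : 0 < s := Real.sqrt_pos.mpr hargpos
    have hcpos : 0 < (N : ℝ) * s := by positivity
    have hcant := cantelli μN hYℒ hcpos
    have hsubset : {x : Fin N → α | (Jq : ℝ) ≥
        (1 / (N : ℝ)) * (∑ i : Fin N, f (x i)) - s}ᶜ
        ⊆ {x : Fin N → α |
            (∫ z, (∑ i : Fin N, f (z i)) ∂μN) + (N : ℝ) * s < ∑ i : Fin N, f (x i)} := by
      intro x hx
      simp only [Set.mem_compl_iff, Set.mem_setOf_eq, not_le, ge_iff_le] at hx
      simp only [Set.mem_setOf_eq, EY]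
      have h1 : Jq + s < (1 / (N : ℝ)) * (∑ i : Fin N, f (x i)) := by linarith
      have h2 : (N : ℝ) * (Jq + s) < (N : ℝ) * ((1 / (N : ℝ)) * (∑ i : Fin N, f (x i))) :=
        mul_lt_mul_of_pos_left h1 hNpos
      have h3 : (N : ℝ) * ((1 / (N : ℝ)) * (∑ i : Fin N, f (x i)))
          = ∑ i : Fin N, f (x i) := by field_simp
      rw [h3] at h2
      linarith
    have harith : variance (fun x : Fin N → α => ∑ i : Fin N, f (x i)) μN /
        (variance (fun x : Fin N → α => ∑ i : Fin N, f (x i)) μN + ((N : ℝ) * s) ^ 2) = δ := by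
      have hδ : δ ≠ 0 := hδ0.ne'
      have hVne : V ≠ 0 := hV.ne'
      have hNne : (N : ℝ) ≠ 0 := hNpos.ne'
      have hAne : (N : ℝ) * V ≠ 0 := mul_ne_zero hNne hVne
      have e1 : ((N : ℝ)) ^ 2 * (((1 - δ) / δ) * V / N) = ((N : ℝ) * V) * (1 - δ) / δ := by
        field_simp
      have hden : (N : ℝ) * V + ((N : ℝ) * V) * (1 - δ) / δ = ((N : ℝ) * V) / δ := by
        field_simp
        ring
      rw [hVarY, mul_pow, hs2, e1, hden, div_div_eq_mul_div, mul_comm, mul_div_assoc,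
        div_self hAne, mul_one]
    calc μN _ ≤ μN {x : Fin N → α |
            (∫ z, (∑ i : Fin N, f (z i)) ∂μN) + (N : ℝ) * s < ∑ i : Fin N, f (x i)} :=
          measure_mono hsubset
      _ ≤ ENNReal.ofReal _ := hcant
      _ = ENNReal.ofReal δ := by rw [harith]



open MeasureTheory

/-- Theorem 2: with probability at least `1 − δ` over `N` i.i.d. samples from `q`,
the true expected reward `J = ∫ r dp` lower-bounds the empirical
marginalized-importance-sampling estimate minus a variance penalty. -/
theorem lower_bound_objective
    {α : Type*} [MeasurableSpace α]
    (p q : Measure α) [IsProbabilityMeasure p] [IsProbabilityMeasure q]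
    (hpq : p ≪ q)
    (r : α → ℝ) (hr : Measurable r)
    (R : ℝ) (hR : 0 ≤ R) (hbdd : ∀ᵐ x ∂q, |r x| ≤ R)
    (hwr : Integrable (fun x => ((p.rnDeriv q x).toReal * r x) ^ 2) q)
    (N : ℕ) (hN : 1 ≤ N)
    (δ : ℝ) (hδ0 : 0 < δ) (hδ1 : δ ≤ 1) :
    (Measure.pi fun _ : Fin N => q)
      {x : Fin N → α |
        (∫ y, r y ∂p) ≥
          (1 / (N : ℝ)) * (∑ i : Fin N, (p.rnDeriv q (x i)).toReal * r (x i)) -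
            Real.sqrt (((1 - δ) / δ) *
              (∫ y, ((p.rnDeriv q y).toReal * r y -
                  ∫ z, (p.rnDeriv q z).toReal * r z ∂q) ^ 2 ∂q) / N)} ≥
      ENNReal.ofReal (1 - δ) := by
  rcases eq_or_lt_of_le hδ1 with rfl | hδlt
  · simp
  have hfm : Measurable fun y => (p.rnDeriv q y).toReal * r y :=
    (Measure.measurable_rnDeriv p q).ennreal_toReal.mul hr
  have hf2 : MemLp (fun y => (p.rnDeriv q y).toReal * r y) 2 q :=
    (memLp_two_iff_integrable_sq hfm.aestronglyMeasurable).mpr hwr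
  have hJ : (∫ y, r y ∂p) = ∫ y, (p.rnDeriv q y).toReal * r y ∂q := by
    rw [← MeasureTheory.integral_rnDeriv_smul hpq]
    simp [smul_eq_mul]
  simp only [hJ]
  exact main_aux q hfm hf2 N hN hδ0 hδlt
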